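/- Let m1,m2,n1,n2 ≥ 0 with min(m2,n2) > 0. Define ²T(m1,m2,n1,n2) ⊂ Z_+^4 as the disjoint union of the four sets: {(0,b,0,d) : d ≤ n2, b ≤ n1, d+b ≤ m2}, {(a,0,0,d) : 1 ≤ a ≤ m1, d ≤ n2, d−a ≤ m2, a−2d ≤ n1}, {(0,b,c,0) : c ≥ 1, c+b ≤ m2, b+2c ≤ n1}, and {(a,0,c,0) : 1 ≤ a ≤ m1, 1 ≤ c ≤ m2, a+2c ≤ n1}. Then |²T(m1,m2,n1,n2)| = |²T(m1,m2−1,n1,n2−1)| + min(2(m1+m2), 2(n1+n2), m1+n1) + 1. -/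
import Mathlib

set_option maxHeartbeats 2000000

/-- The reduced Berenstein–Zelevinsky set ²T^C for type C2, as a disjoint union
of four sets of quadruples (a,b,c,d). -/
def T2set (m1 m2 n1 n2 : ℤ) : Set (ℤ × ℤ × ℤ × ℤ) :=
  {p | (p.1 = 0 ∧ p.2.2.1 = 0 ∧ 0 ≤ p.2.1 ∧ 0 ≤ p.2.2.2 ∧
          p.2.2.2 ≤ n2 ∧ p.2.1 ≤ n1 ∧ p.2.2.2 + p.2.1 ≤ m2) ∨
       (p.2.1 = 0 ∧ p.2.2.1 = 0 ∧ 1 ≤ p.1 ∧ p.1 ≤ m1 ∧ 0 ≤ p.2.2.2 ∧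
          p.2.2.2 ≤ n2 ∧ p.2.2.2 - p.1 ≤ m2 ∧ p.1 - 2 * p.2.2.2 ≤ n1) ∨
       (p.1 = 0 ∧ p.2.2.2 = 0 ∧ 0 ≤ p.2.1 ∧ 1 ≤ p.2.2.1 ∧
          p.2.2.1 + p.2.1 ≤ m2 ∧ p.2.1 + 2 * p.2.2.1 ≤ n1) ∨
       (p.2.1 = 0 ∧ p.2.2.2 = 0 ∧ 1 ≤ p.1 ∧ p.1 ≤ m1 ∧ 1 ≤ p.2.2.1 ∧
          p.2.2.1 ≤ m2 ∧ p.1 + 2 * p.2.2.1 ≤ n1)}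

/-- The parametrization of the "difference path". -/
def gfun (m2 n2 t : ℤ) : ℤ × ℤ × ℤ × ℤ :=
  (max 0 (max t (-t) - m2), max 0 (m2 - max t (-t)), min (max (-t) 0) m2, min (max t 0) n2)

lemma T2set_finite (m1 m2 n1 n2 : ℤ) : (T2set m1 m2 n1 n2).Finite := by
  apply Set.Finite.subset
    (((Set.finite_Icc 0 (max m1 0)).prod ((Set.finite_Icc 0 (max (max n1 m2) 0)).prod
      ((Set.finite_Icc 0 (max m2 0)).prod (Set.finite_Icc 0 (max n2 0)))))
    )
  rintro ⟨a, b, c, d⟩ hp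
  simp only [T2set, Set.mem_setOf_eq] at hp
  simp only [Set.mem_prod, Set.mem_Icc]
  omega

lemma T2set_diff_eq (m1 m2 n1 n2 : ℤ) (hm1 : 0 ≤ m1) (hn1 : 0 ≤ n1)
    (hm2 : 1 ≤ m2) (hn2 : 1 ≤ n2) :
    T2set m1 m2 n1 n2 \ T2set m1 (m2 - 1) n1 (n2 - 1) =
      gfun m2 n2 '' Set.Icc (max (-(m1 + m2)) (m2 - n1)) (min (m1 + m2) (m2 + n1 + 2 * n2)) := by
  ext ⟨a, b, c, d⟩
  simp only [T2set, Set.mem_diff, Set.mem_setOf_eq, Set.mem_image, Set.mem_Icc, gfun,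
    Prod.mk.injEq]
  constructor
  · rintro ⟨hnew, hold⟩
    rcases hnew with h1 | h2 | h3 | h4
    · have hx : ¬ (a = 0 ∧ c = 0 ∧ 0 ≤ b ∧ 0 ≤ d ∧ d ≤ n2 - 1 ∧ b ≤ n1 ∧ d + b ≤ m2 - 1) :=
        fun hh => hold (Or.inl hh)
      exact ⟨m2 - b, by omega, by omega⟩
    · have hx : ¬ (b = 0 ∧ c = 0 ∧ 1 ≤ a ∧ a ≤ m1 ∧ 0 ≤ d ∧ d ≤ n2 - 1 ∧ d - a ≤ m2 - 1 ∧
          a - 2 * d ≤ n1) := fun hh => hold (Or.inr (Or.inl hh))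
      exact ⟨m2 + a, by omega, by omega⟩
    · have hx : ¬ (a = 0 ∧ d = 0 ∧ 0 ≤ b ∧ 1 ≤ c ∧ c + b ≤ m2 - 1 ∧ b + 2 * c ≤ n1) :=
        fun hh => hold (Or.inr (Or.inr (Or.inl hh)))
      exact ⟨-c, by omega, by omega⟩
    · have hx : ¬ (b = 0 ∧ d = 0 ∧ 1 ≤ a ∧ a ≤ m1 ∧ 1 ≤ c ∧ c ≤ m2 - 1 ∧ a + 2 * c ≤ n1) :=
        fun hh => hold (Or.inr (Or.inr (Or.inr hh)))
      exact ⟨-m2 - a, by omega, by omega⟩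
  · rintro ⟨t, ht, ha, hb, hc, hd⟩
    refine ⟨?_, ?_⟩
    · rcases lt_or_ge t 0 with h0 | h0
      · rcases le_or_gt (-t) m2 with hq | hq
        · exact Or.inr (Or.inr (Or.inl (by omega)))
        · exact Or.inr (Or.inr (Or.inr (by omega)))
      · rcases le_or_gt t m2 with hq | hq
        · exact Or.inl (by omega)
        · exact Or.inr (Or.inl (by omega))
    · rintro (hx | hx | hx | hx) <;> omega

/-- Recursion for |²T^C| when min(m2,n2) > 0. -/
theorem stmt_6 (m1 m2 n1 n2 : ℤ) (hm1 : 0 ≤ m1) (hn1 : 0 ≤ n1)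
    (h : 0 < min m2 n2) :
    ((T2set m1 m2 n1 n2).ncard : ℤ) =
      (T2set m1 (m2 - 1) n1 (n2 - 1)).ncard +
        min (min (2 * (m1 + m2)) (2 * (n1 + n2))) (m1 + n1) + 1 := by
  have hm2 : 1 ≤ m2 := by omega
  have hn2 : 1 ≤ n2 := by omega
  have hsub : T2set m1 (m2 - 1) n1 (n2 - 1) ⊆ T2set m1 m2 n1 n2 := by
    rintro ⟨a, b, c, d⟩ hp
    simp only [T2set, Set.mem_setOf_eq] at hp ⊢
    omega
  have hkey := Set.ncard_diff_add_ncard_of_subset hsub (T2set_finite m1 m2 n1 n2)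
  set t1 := max (-(m1 + m2)) (m2 - n1) with ht1
  set t2 := min (m1 + m2) (m2 + n1 + 2 * n2) with ht2
  have hdiff : (T2set m1 m2 n1 n2 \ T2set m1 (m2 - 1) n1 (n2 - 1)).ncard =
      (Set.Icc t1 t2).ncard := by
    rw [T2set_diff_eq m1 m2 n1 n2 hm1 hn1 hm2 hn2]
    apply Set.ncard_image_of_injOn
    intro s hs t ht hst
    simp only [gfun, Prod.mk.injEq] at hst
    simp only [Set.mem_Icc] at hs ht
    omega
  have hIcc : (Set.Icc t1 t2).ncard = (t2 + 1 - t1).toNat := by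
    rw [← Finset.coe_Icc, Set.ncard_coe_finset, Int.card_Icc]
  rw [hdiff, hIcc] at hkey
  have : (T2set m1 m2 n1 n2).ncard = (t2 + 1 - t1).toNat +
      (T2set m1 (m2 - 1) n1 (n2 - 1)).ncard := hkey.symm
  rw [this]
  push_cast
  omega
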